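/- Let d ≥ 1, s ≥ 1, N ≥ 1 be integers, let x_0, …, x_{N−1} ∈ ℝ^d, and let f : ℝ^d → ℂ be of class C^{2s} with D^α f integrable for every multi-index α with |α| ≤ 2s. Set ε = min{N^{-1/d}, 1/d} and, for η > 0, define L_{≥η} = (1/N) ∑_{j=0}^{N−1} ∫_{‖ξ‖ ≥ η} e^{2πi x_j · ξ} e^{-π ε² ‖ξ‖²} f̂(ξ) dξ. Then there exists a constant C > 0 depending only on d and s such that for all η > 0, |L_{≥η}| ≤ C (∑_{|α| ≤ 2s} ‖D^α f‖_{L¹(ℝ^d)}) · max{N, d^d} · η^{-2s}. -/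

import Mathlib

open MeasureTheory Filter Real

/-- The Fourier transform `f̂(ξ) = ∫_{ℝ^d} e^{-2πi x·ξ} f(x) dx` of `f : ℝ^d → ℂ`. -/
noncomputable def FT {d : ℕ} (f : EuclideanSpace ℝ (Fin d) → ℂ)
    (ξ : EuclideanSpace ℝ (Fin d)) : ℂ :=
  ∫ x : EuclideanSpace ℝ (Fin d),
    Complex.exp ((-2 * π * Complex.I) * ((inner ℝ x ξ : ℝ) : ℂ)) * f x

/-- The partial derivative `∂_{x_i} f` of `f : ℝ^d → ℂ`. -/
noncomputable def pderiv' {d : ℕ} (i : Fin d) (f : EuclideanSpace ℝ (Fin d) → ℂ) :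
    EuclideanSpace ℝ (Fin d) → ℂ :=
  fun x => fderiv ℝ f x (EuclideanSpace.single i 1)

/-- The multi-index derivative `D^α f = ∂^{α_1}_{x_1} ⋯ ∂^{α_d}_{x_d} f` of `f : ℝ^d → ℂ`. -/
noncomputable def mderiv {d : ℕ} (α : Fin d → ℕ) (f : EuclideanSpace ℝ (Fin d) → ℂ) :
    EuclideanSpace ℝ (Fin d) → ℂ :=
  (List.finRange d).foldr (fun i g => (pderiv' i)^[α i] g) f

/-- The (finite) set of multi-indices `α` on `ℝ^d` with `|α| ≤ M`. -/
def mIdx (d M : ℕ) : Finset (Fin d → ℕ) :=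
  (Fintype.piFinset fun _ : Fin d => Finset.range (M + 1)).filter
    fun α => (∑ i, α i) ≤ M

/-- The paper's Gaussian regularization scale `ε = min {N^{-1/d}, 1/d}`. -/
noncomputable def regScale (d N : ℕ) : ℝ :=
  min ((N : ℝ) ^ (-(1 : ℝ) / (d : ℝ))) (1 / (d : ℝ))



section Aux
variable {d : ℕ}


lemma contDiff_pderiv {n : ℕ} {f : EuclideanSpace ℝ (Fin d) → ℂ} (i : Fin d)
    (hf : ContDiff ℝ (n + 1 : ℕ) f) : ContDiff ℝ (n : ℕ) (pderiv' i f) := by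
  have h1 : ContDiff ℝ (n : ℕ) (fderiv ℝ f) := by
    apply hf.fderiv_right
    exact_mod_cast Nat.le_refl (n+1)
  exact (ContinuousLinearMap.apply ℝ ℂ (EuclideanSpace.single i 1)).contDiff.comp h1

lemma contDiff_pderiv_iterate {f : EuclideanSpace ℝ (Fin d) → ℂ} (i : Fin d) (k : ℕ) {n : ℕ}
    (hf : ContDiff ℝ (n + k : ℕ) f) : ContDiff ℝ (n : ℕ) ((pderiv' i)^[k] f) := by
  induction k generalizing f with
  | zero => simpa using hf
  | succ k ih =>
    rw [Function.iterate_succ_apply]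
    exact ih (contDiff_pderiv i (by rw [show n + k + 1 = n + (k+1) by omega]; exact hf))

lemma pderiv_of_pderiv {f : EuclideanSpace ℝ (Fin d) → ℂ} (i j : Fin d)
    (hf : ContDiff ℝ (2 : ℕ) f) (x : EuclideanSpace ℝ (Fin d)) :
    pderiv' i (pderiv' j f) x
      = fderiv ℝ (fderiv ℝ f) x (EuclideanSpace.single i 1) (EuclideanSpace.single j 1) := by
  have hdf : DifferentiableAt ℝ (fderiv ℝ f) x := by
    have h1 : ContDiff ℝ (1 : ℕ) (fderiv ℝ f) := hf.fderiv_right (by norm_cast)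
    exact (h1.differentiable (by norm_cast)).differentiableAt
  have hcomp : pderiv' j f
      = (ContinuousLinearMap.apply ℝ ℂ (EuclideanSpace.single j 1)) ∘ (fderiv ℝ f) := rfl
  show fderiv ℝ (pderiv' j f) x (EuclideanSpace.single i 1) = _
  rw [hcomp, fderiv_comp x (ContinuousLinearMap.apply ℝ ℂ
      (EuclideanSpace.single j 1)).differentiableAt hdf]
  simp

-- Schwarz
lemma pderiv_comm {f : EuclideanSpace ℝ (Fin d) → ℂ} (i j : Fin d)
    (hf : ContDiff ℝ (2 : ℕ) f) (x : EuclideanSpace ℝ (Fin d)) :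
    pderiv' i (pderiv' j f) x = pderiv' j (pderiv' i f) x := by
  rw [pderiv_of_pderiv i j hf x, pderiv_of_pderiv j i hf x]
  exact (hf.contDiffAt.isSymmSndFDerivAt (by simp)) _ _

lemma pderiv_comm_iterate {f : EuclideanSpace ℝ (Fin d) → ℂ} (i j : Fin d) (k : ℕ)
    (hf : ContDiff ℝ (k + 1 : ℕ) f) :
    pderiv' j ((pderiv' i)^[k] f) = (pderiv' i)^[k] (pderiv' j f) := by
  induction k generalizing f with
  | zero => simp
  | succ k ih =>
    rw [Function.iterate_succ_apply, Function.iterate_succ_apply]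
    rw [ih (by
      have := contDiff_pderiv (n := k + 1) i (by rw [show k+1+1 = k+2 by omega]; exact hf)
      exact this)]
    congr 1
    funext x
    exact pderiv_comm j i (hf.of_le (by exact_mod_cast by omega)) x


lemma foldr_filter (α : Fin d → ℕ) (f : EuclideanSpace ℝ (Fin d) → ℂ) (l : List (Fin d)) :
    l.foldr (fun t g => (pderiv' t)^[α t] g) f
      = (l.filter (fun t => α t ≠ 0)).foldr (fun t g => (pderiv' t)^[α t] g) f := by
  induction l with
  | nil => rfl
  | cons t l ih =>
    by_cases h : α t = 0
    · simp [List.filter_cons, h, ih]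
    · simp [List.filter_cons, h, ih]

lemma filter_finRange_single (i : Fin d) (p : Fin d → Bool) (hp : ∀ t, p t = (t == i)) :
    (List.finRange d).filter p = [i] := by
  rw [List.filter_congr (fun t _ => hp t)]
  rw [List.filter_beq]
  rw [List.count_eq_one_of_mem (List.nodup_finRange d) (List.mem_finRange i)]
  rfl

lemma mderiv_single (i : Fin d) (k : ℕ) (f : EuclideanSpace ℝ (Fin d) → ℂ) :
    mderiv (fun t => if t = i then k else 0) f = (pderiv' i)^[k] f := by
  unfold mderiv
  rw [foldr_filter]
  by_cases hk : k = 0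
  · subst hk
    simp
  · rw [filter_finRange_single i _ (fun t => by by_cases h : t = i <;> simp [h, hk])]
    simp

lemma filter_finRange_pair (j i : Fin d) (hji : j < i) (p : Fin d → Bool)
    (hp : ∀ t, p t = (t == j || t == i)) :
    (List.finRange d).filter p = [j, i] := by
  have hs1 : ((List.finRange d).filter p).Pairwise (· ≤ ·) :=
    ((List.pairwise_lt_finRange d).sublist List.filter_sublist).imp le_of_lt
  have hs2 : ([j, i] : List (Fin d)).Pairwise (· ≤ ·) := by
    simp [hji.le]
  have hnd1 : ((List.finRange d).filter p).Nodup := (List.nodup_finRange d).filter p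
  have hnd2 : ([j, i] : List (Fin d)).Nodup := by simp [hji.ne]
  have hperm : List.Perm ((List.finRange d).filter p) [j, i] := by
    rw [List.perm_ext_iff_of_nodup hnd1 hnd2]
    intro t
    simp [List.mem_filter, hp t]
  exact List.Perm.eq_of_pairwise' hs1 hs2 hperm

lemma mderiv_pair (j i : Fin d) (hji : j < i) (a b : ℕ) (ha : a ≠ 0) (hb : b ≠ 0)
    (f : EuclideanSpace ℝ (Fin d) → ℂ) :
    mderiv (fun t => if t = j then a else if t = i then b else 0) f
      = (pderiv' j)^[a] ((pderiv' i)^[b] f) := by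
  unfold mderiv
  rw [foldr_filter]
  rw [filter_finRange_pair j i hji _ (fun t => by
    by_cases h1 : t = j
    · simp [h1, ha]
    · by_cases h2 : t = i <;> simp [h1, h2, hb, hji.ne'])]
  simp [hji.ne, hji.ne']

lemma mderiv_zero (f : EuclideanSpace ℝ (Fin d) → ℂ) :
    mderiv (fun _ => 0) f = f := by
  unfold mderiv
  rw [foldr_filter]
  simp
-- chunk c
open FourierTransform in
example : True := trivial

lemma opnorm_le_sum_pd (g : EuclideanSpace ℝ (Fin d) → ℂ) (x : EuclideanSpace ℝ (Fin d)) :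
    ‖fderiv ℝ g x‖ ≤ ∑ j, ‖pderiv' j g x‖ := by
  apply ContinuousLinearMap.opNorm_le_bound _ (Finset.sum_nonneg fun j _ => norm_nonneg _)
  intro v
  have hv : v = ∑ j, v j • EuclideanSpace.single j (1 : ℝ) := by
    ext t
    rw [WithLp.ofLp_sum, Fintype.sum_apply]
    simp [EuclideanSpace.single_apply]
  calc ‖fderiv ℝ g x v‖ = ‖∑ j, v j • fderiv ℝ g x (EuclideanSpace.single j 1)‖ := by
        conv_lhs => rw [hv]
        rw [map_sum]
        simp
    _ ≤ ∑ j, ‖v j • fderiv ℝ g x (EuclideanSpace.single j 1)‖ := norm_sum_le _ _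
    _ ≤ ∑ j, ‖pderiv' j g x‖ * ‖v‖ := by
        apply Finset.sum_le_sum
        intro j _
        rw [norm_smul]
        rw [mul_comm]
        apply mul_le_mul_of_nonneg_left _ (norm_nonneg _)
        calc ‖v j‖ = |(inner ℝ v (EuclideanSpace.single j (1:ℝ)) : ℝ)| := by
              rw [EuclideanSpace.inner_single_right]
              simp [Real.norm_eq_abs]
          _ ≤ ‖v‖ * ‖EuclideanSpace.single j (1:ℝ)‖ := abs_real_inner_le_norm _ _
          _ = ‖v‖ := by rw [EuclideanSpace.norm_single]; simp
    _ = (∑ j, ‖pderiv' j g x‖) * ‖v‖ := by rw [← Finset.sum_mul]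

lemma sum_single_idx {M : ℕ} (j : Fin d) (a : ℕ) (ha : a ≤ M) :
    (∑ t, (if t = j then a else 0)) ≤ M := by
  simp [Finset.sum_ite_eq']
  omega

lemma sum_pair_idx {M : ℕ} (j i : Fin d) (hne : j ≠ i) (a b : ℕ) (hab : a + b ≤ M) :
    (∑ t, (if t = j then a else if t = i then b else 0)) ≤ M := by
  have : ∀ t, (if t = j then a else if t = i then b else 0)
      = (if t = j then a else 0) + (if t = i then b else 0) := by
    intro t
    by_cases h1 : t = j
    · subst h1; simp [hne]
    · by_cases h2 : t = i <;> simp [h1, h2, Ne.symm hne]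
  simp only [this, Finset.sum_add_distrib]
  simp [Finset.sum_ite_eq']
  omega

variable {M : ℕ} {f : EuclideanSpace ℝ (Fin d) → ℂ}

lemma integrable_pd_mix (hf : ContDiff ℝ (M : ℕ) f)
    (hint : ∀ α : Fin d → ℕ, (∑ t, α t) ≤ M → Integrable (mderiv α f))
    (i j : Fin d) (k : ℕ) (hk : k + 1 ≤ M) :
    Integrable (pderiv' j ((pderiv' i)^[k] f)) := by
  rcases Nat.eq_zero_or_pos k with hk0 | hk0
  · subst hk0
    simp only [Function.iterate_zero, id_eq]
    have := mderiv_single j 1 f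
    simp only [Function.iterate_one] at this
    rw [← this]
    exact hint _ (sum_single_idx j 1 hk)
  rcases lt_trichotomy j i with hji | hji | hji
  · have := mderiv_pair j i hji 1 k one_ne_zero (by omega) f
    simp only [Function.iterate_one] at this
    rw [← this]
    exact hint _ (sum_pair_idx j i hji.ne 1 k (by omega))
  · subst hji
    rw [← Function.iterate_succ_apply' (pderiv' j) k f, ← mderiv_single j (k+1) f]
    exact hint _ (sum_single_idx j (k+1) hk)
  · rw [pderiv_comm_iterate i j k (hf.of_le (by exact_mod_cast hk))]
    have := mderiv_pair i j hji (k) 1 (by omega) one_ne_zero f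
    simp only [Function.iterate_one] at this
    rw [← this]
    exact hint _ (sum_pair_idx i j hji.ne k 1 (by omega))

lemma integrable_fderiv_pd_iterate (hf : ContDiff ℝ (M : ℕ) f)
    (hint : ∀ α : Fin d → ℕ, (∑ t, α t) ≤ M → Integrable (mderiv α f))
    (i : Fin d) (k : ℕ) (hk : k + 1 ≤ M) :
    Integrable (fderiv ℝ ((pderiv' i)^[k] f)) := by
  set g := (pderiv' i)^[k] f with hg
  have hgc : ContDiff ℝ (1 : ℕ) g :=
    contDiff_pderiv_iterate i k (hf.of_le (by exact_mod_cast (show 1 + k ≤ M by omega)))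
  apply Integrable.mono' (g := fun x => ∑ j, ‖pderiv' j g x‖)
  · exact integrable_finset_sum _ fun j _ => (integrable_pd_mix hf hint i j k hk).norm
  · apply Continuous.aestronglyMeasurable
    exact hgc.continuous_fderiv (by norm_cast)
  · exact Filter.Eventually.of_forall fun x => opnorm_le_sum_pd g x

lemma FT_pd_iterate (hf : ContDiff ℝ (M : ℕ) f)
    (hint : ∀ α : Fin d → ℕ, (∑ t, α t) ≤ M → Integrable (mderiv α f))
    (i : Fin d) (k : ℕ) (hk : k ≤ M) (ξ : EuclideanSpace ℝ (Fin d)) :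
    FourierTransform.fourier ((pderiv' i)^[k] f) ξ
      = (2 * π * Complex.I * (ξ i : ℝ)) ^ k * FourierTransform.fourier f ξ := by
  induction k with
  | zero => simp
  | succ k ih =>
    set g := (pderiv' i)^[k] f with hgdef
    have hgint : Integrable g := by
      rw [hgdef, ← mderiv_single i k f]
      exact hint _ (sum_single_idx i k (by omega))
    have hgdiff : Differentiable ℝ g := by
      have hgc : ContDiff ℝ (1 : ℕ) g :=
        contDiff_pderiv_iterate i k
          (hf.of_le (by exact_mod_cast (show 1 + k ≤ M by omega)))
      exact hgc.differentiable (by norm_cast)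
    have hgf : Integrable (fderiv ℝ g) := integrable_fderiv_pd_iterate hf hint i k hk
    rw [Function.iterate_succ_apply']
    have h1 : pderiv' i g = fun x => fderiv ℝ g x (EuclideanSpace.single i 1) := rfl
    rw [h1]
    rw [← Real.fourier_continuousLinearMap_apply hgf]
    rw [Real.fourier_fderiv hgint hgdiff hgf]
    rw [VectorFourier.fourierSMulRight_apply]
    rw [ih (by omega)]
    have hinner : ((-innerSL ℝ) ξ) (EuclideanSpace.single i (1:ℝ)) = -(ξ i) := by
      simp [EuclideanSpace.inner_single_right, real_inner_comm]
    rw [hinner]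
    simp only [Complex.real_smul, smul_eq_mul]
    push_cast
    ring

lemma FT_eq_fourierIntegral (f : EuclideanSpace ℝ (Fin d) → ℂ) (ξ : EuclideanSpace ℝ (Fin d)) :
    FT f ξ = FourierTransform.fourier f ξ := by
  rw [Real.fourier_eq']
  unfold FT
  congr 1
  funext v
  rw [smul_eq_mul]
  congr 1
  push_cast
  ring_nf

lemma norm_fourierIntegral_le (f : EuclideanSpace ℝ (Fin d) → ℂ) (ξ : EuclideanSpace ℝ (Fin d)) :
    ‖FourierTransform.fourier f ξ‖ ≤ ∫ v, ‖f v‖ :=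
  VectorFourier.norm_fourierIntegral_le_integral_norm _ _ _ f ξ

lemma single_mem_mIdx {s : ℕ} (hd : 1 ≤ d) (i : Fin d) :
    (fun t => if t = i then 2 * s else 0) ∈ mIdx d (2 * s) := by
  unfold mIdx
  rw [Finset.mem_filter]
  constructor
  · rw [Fintype.mem_piFinset]
    intro t
    by_cases h : t = i <;> simp [h]
  · have := sum_single_idx (M := 2 * s) i (2 * s) le_rfl
    exact this

lemma exists_big_coord (hd : 1 ≤ d) (ξ : EuclideanSpace ℝ (Fin d)) :
    ∃ i : Fin d, ‖ξ‖ ^ 2 ≤ d * (ξ i) ^ 2 := by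
  have : Nonempty (Fin d) := ⟨⟨0, hd⟩⟩
  obtain ⟨i, _, hi⟩ := Finset.exists_max_image Finset.univ (fun j => (ξ j) ^ 2)
    ⟨Classical.arbitrary (Fin d), Finset.mem_univ _⟩
  refine ⟨i, ?_⟩
  have hn : ‖ξ‖ ^ 2 = ∑ j, (ξ j) ^ 2 := by
    rw [EuclideanSpace.norm_eq, sq_sqrt (Finset.sum_nonneg fun j _ => sq_nonneg _)]
    simp [sq_abs]
  rw [hn]
  calc ∑ j, (ξ j) ^ 2 ≤ ∑ _j : Fin d, (ξ i) ^ 2 :=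
        Finset.sum_le_sum fun j _ => hi j (Finset.mem_univ j)
    _ = d * (ξ i) ^ 2 := by simp [mul_comm]

lemma FT_decay {M : ℕ} {f : EuclideanSpace ℝ (Fin d) → ℂ} (hf : ContDiff ℝ (M : ℕ) f)
    (hint : ∀ α : Fin d → ℕ, (∑ t, α t) ≤ M → Integrable (mderiv α f))
    (i : Fin d) (ξ : EuclideanSpace ℝ (Fin d)) :
    (2 * π * |ξ i|) ^ M * ‖FourierTransform.fourier f ξ‖
      ≤ ∫ v, ‖mderiv (fun t => if t = i then M else 0) f v‖ := by
  have key := FT_pd_iterate hf hint i M le_rfl ξ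
  have h1 : ‖FourierTransform.fourier ((pderiv' i)^[M] f) ξ‖
      = (2 * π * |ξ i|) ^ M * ‖FourierTransform.fourier f ξ‖ := by
    rw [key, norm_mul, norm_pow]
    congr 2
    simp only [norm_mul, Complex.norm_real, Complex.norm_I,
      Complex.norm_two, mul_one, Real.norm_eq_abs]
    rw [abs_of_pos Real.pi_pos]
  rw [← h1, mderiv_single]
  exact norm_fourierIntegral_le _ ξ

lemma integrable_gauss {b : ℝ} (hb : 0 < b) :
    Integrable (fun v : EuclideanSpace ℝ (Fin d) => rexp (-b * ‖v‖ ^ 2)) := by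
  have h := (GaussianFourier.integrable_cexp_neg_mul_sq_norm_add
    (V := EuclideanSpace ℝ (Fin d)) (b := (b : ℂ)) (by simpa using hb) 0 0).norm
  apply h.congr
  filter_upwards with v
  rw [Complex.norm_exp]
  have hre : (-(b:ℂ) * (‖v‖:ℂ) ^ 2 + 0 * ((inner ℝ (0 : EuclideanSpace ℝ (Fin d)) v : ℝ) : ℂ))
      = ((-b * ‖v‖ ^ 2 : ℝ) : ℂ) := by push_cast; ring
  rw [hre, Complex.ofReal_re]

lemma integral_gauss {ε : ℝ} (hε : 0 < ε) :
    ∫ v : EuclideanSpace ℝ (Fin d), rexp (-(π * ε ^ 2) * ‖v‖ ^ 2) = (ε ^ d)⁻¹ := by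
  rw [GaussianFourier.integral_rexp_neg_mul_sq_norm (by positivity)]
  have h1 : π / (π * ε ^ 2) = (ε⁻¹) ^ (2 : ℕ) := by
    rw [inv_pow]
    field_simp
  rw [h1]
  have hd1 : Module.finrank ℝ (EuclideanSpace ℝ (Fin d)) = d := by
    simp [finrank_euclideanSpace]
  rw [hd1]
  rw [← Real.rpow_natCast (ε⁻¹) 2, ← Real.rpow_mul (by positivity)]
  rw [show ((2 : ℕ) : ℝ) * ((d : ℝ) / 2) = (d : ℕ) by push_cast; ring]
  rw [Real.rpow_natCast, inv_pow]

lemma regScale_pos {N : ℕ} (hd : 1 ≤ d) (hN : 1 ≤ N) : 0 < regScale d N := by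
  unfold regScale
  apply lt_min
  · positivity
  · have : (0 : ℝ) < d := by exact_mod_cast hd
    positivity

lemma regScale_pow {N : ℕ} (hd : 1 ≤ d) (hN : 1 ≤ N) :
    ((regScale d N) ^ d)⁻¹ = max (N : ℝ) ((d : ℝ) ^ d) := by
  have hdR : (0 : ℝ) < d := by exact_mod_cast hd
  have hNR : (0 : ℝ) < N := by exact_mod_cast hN
  set X : ℝ := (N : ℝ) ^ ((1 : ℝ) / (d : ℝ)) with hXdef
  have hX : 0 < X := Real.rpow_pos_of_pos hNR _
  have hrw : (N : ℝ) ^ (-(1 : ℝ) / (d : ℝ)) = X⁻¹ := by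
    rw [hXdef, ← Real.rpow_neg hNR.le, neg_div, one_div]
  have hmin : regScale d N = (max X (d : ℝ))⁻¹ := by
    unfold regScale
    rw [hrw, one_div]
    rcases le_total X (d : ℝ) with h | h
    · rw [max_eq_right h, min_eq_right (inv_anti₀ hX h)]
    · rw [max_eq_left h, min_eq_left (inv_anti₀ hdR h)]
  rw [hmin, ← inv_pow, inv_inv]
  have hmax : (max X (d:ℝ)) ^ d = max (X ^ d) ((d:ℝ) ^ d) := by
    rcases le_total X (d:ℝ) with h | h
    · rw [max_eq_right h, max_eq_right (pow_le_pow_left₀ hX.le h d)]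
    · rw [max_eq_left h, max_eq_left (pow_le_pow_left₀ hdR.le h d)]
  rw [hmax]
  congr 1
  rw [hXdef, ← Real.rpow_natCast ((N:ℝ) ^ ((1:ℝ)/(d:ℝ))) d, ← Real.rpow_mul hNR.le]
  rw [show (1 : ℝ) / (d : ℝ) * (d : ℕ) = 1 by field_simp]
  simp

end Aux

/-- **Theorem 3.2 (F-principle in adversarial training): the high-frequency part of the
averaged loss.**  Let `d ≥ 1`, `s ≥ 1`, `N ≥ 1`, let `x_0, …, x_{N−1} ∈ ℝ^d` and let
`f : ℝ^d → ℂ` be of class `C^{2s}` with `D^α f` integrable for all `|α| ≤ 2s`.  With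
`ε = min {N^{-1/d}, 1/d}` and
`L_{≥η} = (1/N) ∑_j ∫_{‖ξ‖ ≥ η} e^{2πi x_j·ξ} e^{-π ε² ‖ξ‖²} f̂(ξ) dξ`, there is a
constant `C > 0` depending only on `d` and `s` with
`|L_{≥η}| ≤ C (∑_{|α| ≤ 2s} ‖D^α f‖_{L¹}) max {N, d^d} η^{-2s}` for all `η > 0`. -/
theorem f_principle_high_frequency (d s : ℕ) (hd : 1 ≤ d) (hs : 1 ≤ s) :
    ∃ C : ℝ, 0 < C ∧ ∀ N : ℕ, 1 ≤ N → ∀ x : Fin N → EuclideanSpace ℝ (Fin d),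
      ∀ f : EuclideanSpace ℝ (Fin d) → ℂ,
      ContDiff ℝ (2 * s) f →
      (∀ α : Fin d → ℕ, (∑ i, α i) ≤ 2 * s → Integrable (mderiv α f)) →
      ∀ η : ℝ, 0 < η →
        ‖(N : ℂ)⁻¹ * ∑ j : Fin N,
            ∫ ξ in {ξ : EuclideanSpace ℝ (Fin d) | η ≤ ‖ξ‖},
              Complex.exp ((2 * π * Complex.I) * ((inner ℝ (x j) ξ : ℝ) : ℂ)) *
                ((Real.exp (-π * regScale d N ^ 2 * ‖ξ‖ ^ 2) : ℂ) * FT f ξ)‖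
          ≤ C * (∑ α ∈ mIdx d (2 * s),
                ∫ y : EuclideanSpace ℝ (Fin d), ‖mderiv α f y‖) *
              max (N : ℝ) ((d : ℝ) ^ d) * (η ^ (2 * s))⁻¹ := by
  have hd0 : (0:ℝ) < d := by exact_mod_cast hd
  refine ⟨(d : ℝ) ^ s, by positivity, ?_⟩
  intro N hN x f hf hint η hη
  have hf' : ContDiff ℝ ((2 * s : ℕ) : ℕ∞) f := by exact_mod_cast hf
  set ε := regScale d N with hεdef
  have hε : 0 < ε := regScale_pos hd hN
  set S := ∑ α ∈ mIdx d (2 * s), ∫ y : EuclideanSpace ℝ (Fin d), ‖mderiv α f y‖ with hSdef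
  have hS0 : 0 ≤ S :=
    Finset.sum_nonneg fun α _ => integral_nonneg fun y => norm_nonneg _
  set B := (d : ℝ) ^ s * S * (η ^ (2 * s))⁻¹ with hBdef
  have hB0 : 0 ≤ B := by positivity
  have hηpow : 0 < η ^ (2 * s) := pow_pos hη _
  -- decay of the Fourier transform on the high-frequency region
  have hdecay : ∀ ξ : EuclideanSpace ℝ (Fin d), η ≤ ‖ξ‖ → ‖FT f ξ‖ ≤ B := by
    intro ξ hξ
    obtain ⟨i, hi⟩ := exists_big_coord hd ξ
    have hkey := FT_decay (M := 2 * s) hf' hint i ξ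
    have hterm : (∫ y : EuclideanSpace ℝ (Fin d),
        ‖mderiv (fun t => if t = i then 2 * s else 0) f y‖) ≤ S :=
      Finset.single_le_sum (f := fun α => ∫ y : EuclideanSpace ℝ (Fin d), ‖mderiv α f y‖)
        (fun α _ => integral_nonneg fun y => norm_nonneg _) (single_mem_mIdx hd i)
    have hkey2 : (2 * π * |ξ i|) ^ (2 * s) * ‖FourierTransform.fourier f ξ‖ ≤ S :=
      hkey.trans hterm
    have habs : |ξ i| ≤ 2 * π * |ξ i| := by
      nlinarith [Real.pi_gt_three, abs_nonneg (ξ i)]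
    have hη2s : η ^ (2 * s) ≤ (d : ℝ) ^ s * (2 * π * |ξ i|) ^ (2 * s) := by
      calc η ^ (2 * s) = (η ^ 2) ^ s := by rw [← pow_mul]
        _ ≤ ((d : ℝ) * (ξ i) ^ 2) ^ s := by
            apply pow_le_pow_left₀ (sq_nonneg η)
            calc η ^ 2 ≤ ‖ξ‖ ^ 2 := pow_le_pow_left₀ hη.le hξ 2
              _ ≤ (d : ℝ) * (ξ i) ^ 2 := hi
        _ = (d : ℝ) ^ s * ((ξ i) ^ 2) ^ s := mul_pow _ _ _
        _ = (d : ℝ) ^ s * |ξ i| ^ (2 * s) := by rw [← sq_abs, ← pow_mul]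
        _ ≤ (d : ℝ) ^ s * (2 * π * |ξ i|) ^ (2 * s) := by
            apply mul_le_mul_of_nonneg_left _ (by positivity)
            exact pow_le_pow_left₀ (abs_nonneg _) habs _
    have hc1 : η ^ (2 * s) * ‖FourierTransform.fourier f ξ‖ ≤ (d : ℝ) ^ s * S := by
      calc η ^ (2 * s) * ‖FourierTransform.fourier f ξ‖
          ≤ ((d : ℝ) ^ s * (2 * π * |ξ i|) ^ (2 * s)) * ‖FourierTransform.fourier f ξ‖ :=
            mul_le_mul_of_nonneg_right hη2s (norm_nonneg _)
        _ = (d : ℝ) ^ s * ((2 * π * |ξ i|) ^ (2 * s) * ‖FourierTransform.fourier f ξ‖) := by ring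
        _ ≤ (d : ℝ) ^ s * S := mul_le_mul_of_nonneg_left hkey2 (by positivity)
    rw [FT_eq_fourierIntegral, hBdef, ← div_eq_mul_inv, le_div_iff₀ hηpow]
    linarith [hc1]
  -- bound for each set integral
  have hb : (0:ℝ) < π * ε ^ 2 := by positivity
  have hgauss_int : Integrable (fun ξ : EuclideanSpace ℝ (Fin d) =>
      rexp (-(π * ε ^ 2) * ‖ξ‖ ^ 2) * B) := (integrable_gauss hb).mul_const B
  have hSmeas : MeasurableSet {ξ : EuclideanSpace ℝ (Fin d) | η ≤ ‖ξ‖} :=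
    (isClosed_le continuous_const continuous_norm).measurableSet
  have hintbd : ∀ j : Fin N,
      ‖∫ ξ in {ξ : EuclideanSpace ℝ (Fin d) | η ≤ ‖ξ‖},
          Complex.exp ((2 * π * Complex.I) * ((inner ℝ (x j) ξ : ℝ) : ℂ)) *
            ((Real.exp (-π * ε ^ 2 * ‖ξ‖ ^ 2) : ℂ) * FT f ξ)‖ ≤ B * (ε ^ d)⁻¹ := by
    intro j
    have hptwise : ∀ ξ ∈ {ξ : EuclideanSpace ℝ (Fin d) | η ≤ ‖ξ‖},
        ‖Complex.exp ((2 * π * Complex.I) * ((inner ℝ (x j) ξ : ℝ) : ℂ)) *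
            ((Real.exp (-π * ε ^ 2 * ‖ξ‖ ^ 2) : ℂ) * FT f ξ)‖
          ≤ rexp (-(π * ε ^ 2) * ‖ξ‖ ^ 2) * B := by
      intro ξ hξ
      rw [norm_mul, norm_mul]
      have h1 : ‖Complex.exp ((2 * π * Complex.I) * ((inner ℝ (x j) ξ : ℝ) : ℂ))‖ = 1 := by
        rw [Complex.norm_exp]
        have : ((2 * π * Complex.I) * ((inner ℝ (x j) ξ : ℝ) : ℂ)).re = 0 := by
          simp [Complex.mul_re, Complex.mul_im]
        rw [this, Real.exp_zero]
      have h2 : ‖((Real.exp (-π * ε ^ 2 * ‖ξ‖ ^ 2) : ℝ) : ℂ)‖ = rexp (-(π * ε ^ 2) * ‖ξ‖ ^ 2) := by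
        rw [Complex.norm_real, Real.norm_eq_abs, abs_of_pos (Real.exp_pos _)]
        ring_nf
      rw [h1, h2, one_mul]
      exact mul_le_mul_of_nonneg_left (hdecay ξ hξ) (Real.exp_pos _).le
    calc ‖∫ ξ in {ξ : EuclideanSpace ℝ (Fin d) | η ≤ ‖ξ‖},
          Complex.exp ((2 * π * Complex.I) * ((inner ℝ (x j) ξ : ℝ) : ℂ)) *
            ((Real.exp (-π * ε ^ 2 * ‖ξ‖ ^ 2) : ℂ) * FT f ξ)‖
        ≤ ∫ ξ in {ξ : EuclideanSpace ℝ (Fin d) | η ≤ ‖ξ‖},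
            ‖Complex.exp ((2 * π * Complex.I) * ((inner ℝ (x j) ξ : ℝ) : ℂ)) *
              ((Real.exp (-π * ε ^ 2 * ‖ξ‖ ^ 2) : ℂ) * FT f ξ)‖ :=
          norm_integral_le_integral_norm _
      _ ≤ ∫ ξ in {ξ : EuclideanSpace ℝ (Fin d) | η ≤ ‖ξ‖},
            rexp (-(π * ε ^ 2) * ‖ξ‖ ^ 2) * B := by
          apply integral_mono_of_nonneg
          · exact Filter.Eventually.of_forall fun ξ => norm_nonneg _
          · exact hgauss_int.restrict
          · rw [EventuallyLE, ae_restrict_iff' hSmeas]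
            exact Filter.Eventually.of_forall hptwise
      _ ≤ ∫ ξ : EuclideanSpace ℝ (Fin d), rexp (-(π * ε ^ 2) * ‖ξ‖ ^ 2) * B :=
          setIntegral_le_integral hgauss_int
            (Filter.Eventually.of_forall fun ξ => by positivity)
      _ = (ε ^ d)⁻¹ * B := by rw [integral_mul_const, integral_gauss hε]
      _ = B * (ε ^ d)⁻¹ := by ring
  -- put everything together
  have hNR : (0:ℝ) < N := by exact_mod_cast hN
  calc ‖(N : ℂ)⁻¹ * ∑ j : Fin N,
        ∫ ξ in {ξ : EuclideanSpace ℝ (Fin d) | η ≤ ‖ξ‖},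
          Complex.exp ((2 * π * Complex.I) * ((inner ℝ (x j) ξ : ℝ) : ℂ)) *
            ((Real.exp (-π * regScale d N ^ 2 * ‖ξ‖ ^ 2) : ℂ) * FT f ξ)‖
      = (N : ℝ)⁻¹ * ‖∑ j : Fin N,
        ∫ ξ in {ξ : EuclideanSpace ℝ (Fin d) | η ≤ ‖ξ‖},
          Complex.exp ((2 * π * Complex.I) * ((inner ℝ (x j) ξ : ℝ) : ℂ)) *
            ((Real.exp (-π * ε ^ 2 * ‖ξ‖ ^ 2) : ℂ) * FT f ξ)‖ := by
        rw [norm_mul, norm_inv, Complex.norm_natCast]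
    _ ≤ (N : ℝ)⁻¹ * ∑ j : Fin N, ‖∫ ξ in {ξ : EuclideanSpace ℝ (Fin d) | η ≤ ‖ξ‖},
          Complex.exp ((2 * π * Complex.I) * ((inner ℝ (x j) ξ : ℝ) : ℂ)) *
            ((Real.exp (-π * ε ^ 2 * ‖ξ‖ ^ 2) : ℂ) * FT f ξ)‖ := by
        apply mul_le_mul_of_nonneg_left (norm_sum_le _ _) (by positivity)
    _ ≤ (N : ℝ)⁻¹ * ∑ _j : Fin N, B * (ε ^ d)⁻¹ := by
        apply mul_le_mul_of_nonneg_left (Finset.sum_le_sum fun j _ => hintbd j) (by positivity)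
    _ = B * (ε ^ d)⁻¹ := by
        rw [Finset.sum_const, Finset.card_univ, Fintype.card_fin, nsmul_eq_mul]
        field_simp
    _ = B * max (N : ℝ) ((d : ℝ) ^ d) := by rw [regScale_pow hd hN]
    _ = (d : ℝ) ^ s * S * max (N : ℝ) ((d : ℝ) ^ d) * (η ^ (2 * s))⁻¹ := by
        rw [hBdef]; ring
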